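/- For nonnegative integers k and i with i ≤ k, the generalized binomial coefficient C(k - 1/2, i) = Γ(k+1/2)/(i!·Γ(k-i+1/2)) equals (1/2^{2i})·C(2k,2i)·C(2i,i)·C(k,i)^{-1}. -/

import Mathlib

lemma gamma_nat_add_half (n : ℕ) :
    Real.Gamma ((n : ℝ) + 1/2)
      = (Nat.factorial (2*n) : ℝ) / (4 ^ n * Nat.factorial n) * Real.sqrt Real.pi := by
  induction n with
  | zero => simpa using Real.Gamma_one_half_eq
  | succ n ih =>
    have h : ((n : ℝ) + 1) + 1/2 = ((n : ℝ) + 1/2) + 1 := by ring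
    push_cast
    rw [h, Real.Gamma_add_one (by positivity), ih]
    have h2 : 2 * (n + 1) = (2 * n + 1) + 1 := by ring
    rw [h2, Nat.factorial_succ, Nat.factorial_succ, Nat.factorial_succ]
    push_cast
    have hn : (Nat.factorial n : ℝ) ≠ 0 := by positivity
    field_simp
    ring

/-- For natural numbers `i ≤ k`, the generalized binomial coefficient
`C(k - 1/2, i) = Γ(k+1/2)/(i!·Γ(k-i+1/2))` equals
`(1/2^(2i))·C(2k,2i)·C(2i,i)·C(k,i)⁻¹`. -/
theorem stmt0 (k i : ℕ) (h : i ≤ k) :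
    Real.Gamma ((k : ℝ) + 1/2) / ((Nat.factorial i : ℝ) * Real.Gamma ((k : ℝ) - (i : ℝ) + 1/2))
      = (1 / 2 ^ (2 * i)) * (Nat.choose (2 * k) (2 * i) : ℝ) * (Nat.choose (2 * i) i : ℝ)
        * ((Nat.choose k i : ℝ))⁻¹ := by
  have hki : ((k : ℝ) - (i : ℝ)) = ((k - i : ℕ) : ℝ) := by
    push_cast [Nat.cast_sub h]; ring
  rw [hki, gamma_nat_add_half, gamma_nat_add_half]
  -- express choose in terms of factorials
  have c1 : (Nat.choose (2*k) (2*i) : ℝ)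
      = (Nat.factorial (2*k) : ℝ) / (Nat.factorial (2*i) * Nat.factorial (2*k - 2*i)) := by
    rw [Nat.cast_choose ℝ (by omega)]
  have c2 : (Nat.choose (2*i) i : ℝ)
      = (Nat.factorial (2*i) : ℝ) / (Nat.factorial i * Nat.factorial (2*i - i)) := by
    rw [Nat.cast_choose ℝ (by omega)]
  have c3 : (Nat.choose k i : ℝ)
      = (Nat.factorial k : ℝ) / (Nat.factorial i * Nat.factorial (k - i)) := by
    rw [Nat.cast_choose ℝ h]
  rw [c1, c2, c3]
  have e1 : 2*i - i = i := by omega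
  have e2 : 2*k - 2*i = 2*(k-i) := by omega
  rw [e1, e2]
  have hpi : Real.sqrt Real.pi ≠ 0 := by positivity
  have f1 : (Nat.factorial (2*k) : ℝ) ≠ 0 := by positivity
  have f2 : (Nat.factorial (2*i) : ℝ) ≠ 0 := by positivity
  have f3 : (Nat.factorial (2*(k-i)) : ℝ) ≠ 0 := by positivity
  have f4 : (Nat.factorial k : ℝ) ≠ 0 := by positivity
  have f5 : (Nat.factorial i : ℝ) ≠ 0 := by positivity
  have f6 : (Nat.factorial (k-i) : ℝ) ≠ 0 := by positivity
  have h4 : (4:ℝ) ^ k = 4 ^ i * 4 ^ (k - i) := by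
    rw [← pow_add]; congr 1; omega
  have h24 : (2:ℝ) ^ (2*i) = 4 ^ i := by
    rw [pow_mul]; norm_num
  rw [h24, h4]
  field_simp
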